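/- Let F be an arbitrary field and n, d positive integers. Let p_1, …, p_n be monic polynomials in F[λ] with p_j dividing p_{j+1} for 1 ≤ j < n. Then there exists a strictly regular n×n matrix polynomial P over F of degree d that is unimodularly equivalent to the diagonal matrix diag(p_1, …, p_n) if and only if Σ_{j=1}^{n} deg p_j = d·n. -/

import Mathlib

open Polynomial

/-- Unimodular equivalence of square matrix polynomials:
`Q = U * P * V` with `U, V` having determinants that are units of `F[λ]`
(i.e. nonzero constants). -/
def UnimodEquiv {F : Type*} [Field F] {n : ℕ}
    (P Q : Matrix (Fin n) (Fin n) F[X]) : Prop :=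
  ∃ U V : Matrix (Fin n) (Fin n) F[X], IsUnit U.det ∧ IsUnit V.det ∧ Q = U * P * V

/-- The coefficient matrix of `λ^d` in the entries of `P`. -/
def leadMat {F : Type*} [Field F] {n : ℕ} (P : Matrix (Fin n) (Fin n) F[X]) (d : ℕ) :
    Matrix (Fin n) (Fin n) F :=
  Matrix.of fun i j => (P i j).coeff d

/-- `P` is a nonzero matrix polynomial of degree `d`:
all entries have degree at most `d` and some entry has degree exactly `d`. -/
def MatDegEq {F : Type*} [Field F] {m n : ℕ} (P : Matrix (Fin m) (Fin n) F[X]) (d : ℕ) : Prop :=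
  (∀ i j, (P i j).degree ≤ (d : WithBot ℕ)) ∧ ∃ i j, (P i j).degree = (d : WithBot ℕ)

section Auxiliary

open Matrix


namespace S2Aux

variable {F : Type*} [Field F]

lemma det_coeff_eq {n d : ℕ} (P : Matrix (Fin n) (Fin n) F[X])
    (h : ∀ i j, (P i j).degree ≤ (d : WithBot ℕ)) :
    (P.det).coeff (d * n) = (Matrix.of fun i j => (P i j).coeff d : Matrix (Fin n) (Fin n) F).det := by
  rw [Matrix.det_apply, Matrix.det_apply, Polynomial.finset_sum_coeff]
  refine Finset.sum_congr rfl fun σ _ => ?_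
  have hnd : ∀ i ∈ Finset.univ, ((fun i => P (σ i) i) i).natDegree ≤ d := fun i _ =>
    Polynomial.natDegree_le_iff_degree_le.mpr (h _ _)
  have hprod := Polynomial.coeff_prod_of_natDegree_le (s := Finset.univ)
    (fun i => P (σ i) i) d hnd
  simp only [Finset.card_univ, Fintype.card_fin] at hprod
  rw [Units.smul_def, zsmul_eq_mul, Polynomial.coeff_intCast_mul, Units.smul_def, zsmul_eq_mul]
  rw [show d * n = n * d from Nat.mul_comm d n, hprod]
  push_cast
  rfl

lemma det_degree_le {n d : ℕ} (P : Matrix (Fin n) (Fin n) F[X])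
    (h : ∀ i j, (P i j).degree ≤ (d : WithBot ℕ)) :
    (P.det).degree ≤ ((d * n : ℕ) : WithBot ℕ) := by
  rw [Matrix.det_apply]
  refine le_trans (Polynomial.degree_sum_le _ _) ?_
  rw [Finset.sup_le_iff]
  intro σ _
  have h1 : (Equiv.Perm.sign σ • ∏ i, P (σ i) i) = ((Equiv.Perm.sign σ : ℤ) : F[X]) * ∏ i, P (σ i) i := by
    rw [Units.smul_def, zsmul_eq_mul]
  rw [h1]
  refine le_trans (Polynomial.degree_mul_le _ _) ?_
  have h2 : degree ((Equiv.Perm.sign σ : ℤ) : F[X]) ≤ 0 := Polynomial.degree_intCast_le _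
  have h3 : (∏ i, P (σ i) i).degree ≤ ((d * n : ℕ) : WithBot ℕ) := by
    refine le_trans (Polynomial.degree_prod_le _ _) ?_
    refine le_trans (Finset.sum_le_sum fun i _ => h (σ i) i) ?_
    rw [Finset.sum_const, Finset.card_univ, Fintype.card_fin]
    rw [show ((d * n : ℕ) : WithBot ℕ) = ((n * d : ℕ) : WithBot ℕ) by rw [Nat.mul_comm]]
    rw [Nat.cast_mul]
    simp [nsmul_eq_mul]
  calc degree ((Equiv.Perm.sign σ : ℤ) : F[X]) + (∏ i, P (σ i) i).degree
      ≤ 0 + ((d * n : ℕ) : WithBot ℕ) := add_le_add h2 h3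
    _ = ((d * n : ℕ) : WithBot ℕ) := zero_add _

end S2Aux

namespace S2Aux

variable {F : Type*} [Field F]

lemma forward_aux {n d : ℕ} (p : Fin n → F[X]) (hmonic : ∀ j, (p j).Monic)
    (P U V : Matrix (Fin n) (Fin n) F[X])
    (hdeg : ∀ i j, (P i j).degree ≤ (d : WithBot ℕ))
    (hlead : IsUnit (Matrix.of fun i j => (P i j).coeff d : Matrix (Fin n) (Fin n) F).det)
    (hU : IsUnit U.det) (hV : IsUnit V.det)
    (hEq : Matrix.diagonal p = U * P * V) :
    ∑ j, (p j).natDegree = d * n := by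
  have hcf : (P.det).coeff (d * n) = _ := det_coeff_eq P hdeg
  have hcne : (P.det).coeff (d * n) ≠ 0 := by
    rw [hcf]; exact hlead.ne_zero
  have hPne : P.det ≠ 0 := fun h0 => hcne (by simp [h0])
  have hndP : (P.det).natDegree = d * n :=
    le_antisymm (Polynomial.natDegree_le_iff_degree_le.mpr (det_degree_le P hdeg))
      (Polynomial.le_natDegree_of_ne_zero hcne)
  have hdetEq : (Matrix.diagonal p).det = U.det * P.det * V.det := by
    rw [hEq, Matrix.det_mul, Matrix.det_mul]
  have hprod : (Matrix.diagonal p).det = ∏ j, p j := Matrix.det_diagonal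
  have hUne : U.det ≠ 0 := hU.ne_zero
  have hVne : V.det ≠ 0 := hV.ne_zero
  have h1 : (∏ j, p j).natDegree = d * n := by
    rw [← hprod, hdetEq, Polynomial.natDegree_mul (mul_ne_zero hUne hPne) hVne,
      Polynomial.natDegree_mul hUne hPne, Polynomial.natDegree_eq_zero_of_isUnit hU,
      Polynomial.natDegree_eq_zero_of_isUnit hV, hndP]
    omega
  rw [← h1, Polynomial.natDegree_prod _ _ fun j _ => (hmonic j).ne_zero]

end S2Aux



namespace S2Aux

universe u

variable {F : Type*} [Field F]

lemma cascade (d : ℕ) (hd : 0 < d) :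
    ∀ (n : ℕ) (ι : Type u) [Fintype ι] [DecidableEq ι] (q : ι → F[X]),
      Fintype.card ι = n → (∀ i, (q i).Monic) → (∑ i, (q i).natDegree) = d * n →
      ∃ G : Matrix ι ι F[X], IsUnit G.det ∧
        (∀ m t, (G m t).natDegree + d ≤ max (q m).natDegree d) ∧
        (∀ f : ι → F[X], (∀ t, (f t).degree < (d : WithBot ℕ)) →
          (∀ m, q m ∣ ∑ t, f t * G m t) → f = 0) := by
  intro n
  induction n using Nat.strong_induction_on with
  | _ n IH =>
  intro ι _ _ q hcard hmon hsum
  by_cases hshort : ∃ C, (q C).natDegree < d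
  case neg =>
    -- all degrees ≥ d : take G = 1
    push_neg at hshort
    refine ⟨1, by simp, ?_, ?_⟩
    · intro m t
      by_cases h : m = t <;> simp [Matrix.one_apply, h, le_max_right]
    · intro f hfd hdvd
      funext m
      have hm := hdvd m
      have hsum1 : ∑ t, f t * (1 : Matrix ι ι F[X]) m t = f m := by
        simp [Matrix.one_apply]
      rw [hsum1] at hm
      by_contra hne
      have h1 : (q m).degree ≤ (f m).degree := Polynomial.degree_le_of_dvd hm hne
      have h2 : ((q m).natDegree : WithBot ℕ) ≤ (f m).degree := by
        rwa [Polynomial.degree_eq_natDegree (hmon m).ne_zero] at h1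
      have h3 : (f m).degree < ((q m).natDegree : WithBot ℕ) :=
        lt_of_lt_of_le (hfd m) (by exact_mod_cast WithBot.coe_le_coe.mpr (hshort m))
      exact absurd (lt_of_le_of_lt h2 h3) (lt_irrefl _)
  case pos =>
  obtain ⟨C, hC⟩ := hshort
  have hn1 : 1 ≤ n := by
    rw [← hcard]
    exact Fintype.card_pos_iff.mpr ⟨C⟩
  -- find a tall B
  have hBex : ∃ B, d < (q B).natDegree := by
    by_contra hall
    push_neg at hall
    have hlt : ∑ i, (q i).natDegree < ∑ _i : ι, d :=
      Finset.sum_lt_sum (fun i _ => hall i) ⟨C, Finset.mem_univ C, hC⟩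
    rw [Finset.sum_const, Finset.card_univ, hcard, smul_eq_mul, Nat.mul_comm, hsum] at hlt
    omega
  obtain ⟨B, hBd⟩ := hBex
  have hBC : B ≠ C := by
    intro h; rw [h] at hBd; omega
  set γ := (q B).natDegree - d with hγ
  -- the reduced family
  set Q : ι → F[X] := fun x => if x = B then X ^ γ * q C else q x with hQ
  have hQmon : ∀ x, (Q x).Monic := by
    intro x
    by_cases h : x = B <;> simp only [hQ, h, if_pos, if_neg, if_true] <;>
      [exact (Polynomial.monic_X_pow γ).mul (hmon C); exact hmon x]
  have hQB : (Q B).natDegree = γ + (q C).natDegree := by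
    simp only [hQ, if_pos rfl]
    rw [Polynomial.natDegree_mul ((pow_ne_zero γ Polynomial.X_ne_zero))
      (hmon C).ne_zero, Polynomial.natDegree_X_pow]
  -- subtype
  have hcard' : Fintype.card {x : ι // x ≠ C} = n - 1 := by
    have h1 : Fintype.card {x : ι // ¬ x = C} = Fintype.card ι - Fintype.card {x : ι // x = C} :=
      Fintype.card_subtype_compl _
    rw [Fintype.card_subtype_eq, hcard] at h1
    exact h1
  have hBmem : (⟨B, hBC⟩ : {x : ι // x ≠ C}) = ⟨B, hBC⟩ := rfl
  -- sums
  have hsum_univ : ∑ i, (q i).natDegree = (q C).natDegree + ∑ i ∈ Finset.univ.erase C, (q i).natDegree := by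
    rw [← Finset.add_sum_erase _ _ (Finset.mem_univ C)]
  have hBe : B ∈ Finset.univ.erase C := Finset.mem_erase.mpr ⟨hBC, Finset.mem_univ B⟩
  have hsum_e : ∑ i ∈ Finset.univ.erase C, (q i).natDegree
      = (q B).natDegree + ∑ i ∈ (Finset.univ.erase C).erase B, (q i).natDegree := by
    rw [← Finset.add_sum_erase _ _ hBe]
  have hsum_eQ : ∑ i ∈ Finset.univ.erase C, (Q i).natDegree
      = (Q B).natDegree + ∑ i ∈ (Finset.univ.erase C).erase B, (q i).natDegree := by
    rw [← Finset.add_sum_erase _ _ hBe]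
    congr 1
    refine Finset.sum_congr rfl fun x hx => ?_
    have hxB : x ≠ B := (Finset.mem_erase.mp hx).1
    simp [hQ, hxB]
  have hsub : ∀ (g : ι → ℕ), ∑ t : {x : ι // x ≠ C}, g ↑t = ∑ i ∈ Finset.univ.erase C, g i :=
    fun g => (Finset.sum_subtype (p := fun x => x ≠ C) (Finset.univ.erase C)
      (fun x => by simp) g).symm
  have hsumQ' : ∑ t : {x : ι // x ≠ C}, (Q t).natDegree = d * (n - 1) := by
    rw [hsub (fun i => (Q i).natDegree), hsum_eQ, hQB]
    have h5 : (q C).natDegree + ((q B).natDegree + ∑ i ∈ (Finset.univ.erase C).erase B, (q i).natDegree) = d * n := by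
      rw [← hsum_e, ← hsum_univ, hsum]
    have h6 : d * (n - 1) + d = d * n := by
      have := Nat.mul_sub_one d n
      omega
    omega
  -- apply IH
  obtain ⟨G', hG'det, hG'deg, hG'ind⟩ :=
    IH (n - 1) (by omega) {x : ι // x ≠ C} (fun t => Q t) hcard' (fun t => hQmon t)
      hsumQ'
  -- define G
  set G : Matrix ι ι F[X] := fun m t =>
    if hm : m = C then (if t = C then 1 else 0)
    else if ht : t = C then (if m = B then X ^ γ else 0)
    else G' ⟨m, hm⟩ ⟨t, ht⟩ with hGdef
  have hGCC : G C C = 1 := by simp [hGdef]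
  have hGCt : ∀ t, t ≠ C → G C t = 0 := by intro t ht; simp [hGdef, ht]
  have hGmC : ∀ m (hm : m ≠ C), G m C = if m = B then X ^ γ else 0 := by
    intro m hm; simp [hGdef, hm]
  have hGmt : ∀ m t (hm : m ≠ C) (ht : t ≠ C), G m t = G' ⟨m, hm⟩ ⟨t, ht⟩ := by
    intro m t hm ht; simp [hGdef, hm, ht]
  -- determinant
  have hdet : IsUnit G.det := by
    have hsubm : G.submatrix (Equiv.sumCompl (fun x : ι => x = C))
        (Equiv.sumCompl (fun x : ι => x = C)) =
        Matrix.fromBlocks 1 0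
          (Matrix.of fun (m : {x : ι // ¬ x = C}) (_ : {x : ι // x = C}) =>
            if (m : ι) = B then X ^ γ else 0) G' := by
      refine Matrix.ext fun i j => ?_
      rcases i with i | i <;> rcases j with j | j <;>
        simp only [Matrix.submatrix_apply, Equiv.sumCompl_apply_inl, Equiv.sumCompl_apply_inr,
          Matrix.fromBlocks_apply₁₁, Matrix.fromBlocks_apply₁₂, Matrix.fromBlocks_apply₂₁,
          Matrix.fromBlocks_apply₂₂, Matrix.of_apply]
      · have hi : (i : ι) = C := i.2
        have hj : (j : ι) = C := j.2
        have hij : i = j := Subtype.ext (by rw [hi, hj])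
        rw [hi, hj, hGCC, hij, Matrix.one_apply_eq]
      · have hi : (i : ι) = C := i.2
        rw [hi, hGCt _ j.2, Matrix.zero_apply]
      · have hj : (j : ι) = C := j.2
        rw [hj, hGmC _ i.2]
      · rw [hGmt _ _ i.2 j.2]
    have hdet1 : G.det = (G.submatrix (Equiv.sumCompl (fun x : ι => x = C))
        (Equiv.sumCompl (fun x : ι => x = C))).det :=
      (Matrix.det_submatrix_equiv_self _ G).symm
    rw [hdet1, hsubm, Matrix.det_fromBlocks_zero₁₂, Matrix.det_one, one_mul]
    exact hG'det
  -- degree bounds for G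
  have hGdegBound : ∀ m t, (G m t).natDegree + d ≤ max (q m).natDegree d := by
    intro m t
    by_cases hm : m = C
    · rw [hm]
      by_cases ht : t = C
      · rw [ht, hGCC, Polynomial.natDegree_one]
        exact le_trans (by omega) (le_max_right _ _)
      · rw [hGCt _ ht, Polynomial.natDegree_zero]
        exact le_trans (by omega) (le_max_right _ _)
    · by_cases ht : t = C
      · rw [ht, hGmC _ hm]
        by_cases hmB : m = B
        · rw [if_pos hmB, Polynomial.natDegree_X_pow, hmB]
          have h1 : γ + d = (q B).natDegree := by omega
          rw [h1]
          exact le_max_left _ _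
        · rw [if_neg hmB, Polynomial.natDegree_zero]
          exact le_trans (by omega) (le_max_right _ _)
      · rw [hGmt _ _ hm ht]
        refine le_trans (hG'deg ⟨m, hm⟩ ⟨t, ht⟩) ?_
        by_cases hmB : m = B
        · have h1 : (Q m).natDegree = γ + (q C).natDegree := by rw [hmB]; exact hQB
          rw [h1, hmB]
          exact le_trans (max_le (by omega) (by omega)) (le_max_left _ _)
        · have h1 : Q m = q m := by simp [hQ, hmB]
          rw [h1]
  -- independence
  have hind : ∀ f : ι → F[X], (∀ t, (f t).degree < (d : WithBot ℕ)) →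
      (∀ m, q m ∣ ∑ t, f t * G m t) → f = 0 := by
    intro f hfd hfdvd
    have hrowC : ∑ t, f t * G C t = f C := by
      rw [Finset.sum_eq_single C]
      · rw [hGCC, mul_one]
      · intro b _ hb; rw [hGCt _ hb, mul_zero]
      · intro h; exact absurd (Finset.mem_univ C) h
    have hdvdC : q C ∣ f C := by rw [← hrowC]; exact hfdvd C
    set g := f C /ₘ q C with hg
    have hfCg : f C = q C * g := by
      conv_lhs => rw [← Polynomial.modByMonic_add_div (f C) (q C)]
      rw [(Polynomial.modByMonic_eq_zero_iff_dvd (hmon C)).mpr hdvdC, zero_add]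
    have hrow : ∀ m (hm : m ≠ C), ∑ t, f t * G m t
        = f C * (if m = B then X ^ γ else 0) +
          ∑ t' : {x : ι // x ≠ C}, f t' * G' ⟨m, hm⟩ t' := by
      intro m hm
      rw [← Finset.add_sum_erase _ (fun t => f t * G m t) (Finset.mem_univ C), hGmC _ hm]
      congr 1
      rw [Finset.sum_subtype (p := fun x => x ≠ C) (Finset.univ.erase C)
        (fun x => by simp) (fun t => f t * G m t)]
      exact Finset.sum_congr rfl fun t _ => by rw [hGmt _ _ hm t.2]
    have hterm : ∀ t, (f t * G B t).degree < ((q B).natDegree : WithBot ℕ) := by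
      intro t
      by_cases h0 : f t * G B t = 0
      · rw [h0, Polynomial.degree_zero]; exact WithBot.bot_lt_coe _
      · have hf0 : f t ≠ 0 := fun h => h0 (by rw [h, zero_mul])
        have hG0 : G B t ≠ 0 := fun h => h0 (by rw [h, mul_zero])
        rw [Polynomial.degree_mul, Polynomial.degree_eq_natDegree hf0,
          Polynomial.degree_eq_natDegree hG0]
        have h1 : (f t).natDegree < d := (Polynomial.natDegree_lt_iff_degree_lt hf0).mpr (hfd t)
        have h2 := hGdegBound B t
        have h3 : max (q B).natDegree d = (q B).natDegree := max_eq_left (le_of_lt hBd)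
        have h4 : (f t).natDegree + (G B t).natDegree < (q B).natDegree := by omega
        exact_mod_cast h4
    have hFB : ∑ t, f t * G B t = 0 := by
      by_contra hne
      have h1 : (q B).degree ≤ (∑ t, f t * G B t).degree :=
        Polynomial.degree_le_of_dvd (hfdvd B) hne
      have h2 : (∑ t, f t * G B t).degree < ((q B).natDegree : WithBot ℕ) := by
        refine lt_of_le_of_lt (Polynomial.degree_sum_le _ _) ?_
        rw [Finset.sup_lt_iff (WithBot.bot_lt_coe _)]
        exact fun t _ => hterm t
      rw [Polynomial.degree_eq_natDegree (hmon B).ne_zero] at h1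
      exact absurd (lt_of_le_of_lt h1 h2) (lt_irrefl _)
    have hred : ∀ m' : {x : ι // x ≠ C}, Q ↑m' ∣ ∑ t' : {x : ι // x ≠ C}, f ↑t' * G' m' t' := by
      rintro ⟨mv, hmv⟩
      by_cases hmB : mv = B
      · have hmeq : (⟨mv, hmv⟩ : {x : ι // x ≠ C}) = ⟨B, hBC⟩ := Subtype.ext hmB
        rw [hmeq]
        have h0 := hrow B hBC
        rw [hFB, if_pos rfl] at h0
        have hSneg : ∑ t' : {x : ι // x ≠ C}, f ↑t' * G' ⟨B, hBC⟩ t' = -(f C * X ^ γ) :=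
          eq_neg_of_add_eq_zero_right h0.symm
        have hQBv : Q (B : ι) = X ^ γ * q C := by simp [hQ]
        rw [hSneg, hfCg, show ((⟨B, hBC⟩ : {x : ι // x ≠ C}) : ι) = B from rfl, hQBv]
        exact ⟨-g, by ring⟩
      · have h0 := hrow mv hmv
        rw [if_neg hmB, mul_zero, zero_add] at h0
        have hQm : Q mv = q mv := by simp [hQ, hmB]
        rw [show ((⟨mv, hmv⟩ : {x : ι // x ≠ C}) : ι) = mv from rfl, hQm, ← h0]
        exact hfdvd mv
    have hf'0 : (fun t' : {x : ι // x ≠ C} => f ↑t') = 0 :=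
      hG'ind (fun t' => f ↑t') (fun t' => hfd ↑t') hred
    have hfC0 : f C = 0 := by
      have h0 := hrow B hBC
      rw [hFB, if_pos rfl] at h0
      have hz : ∑ t' : {x : ι // x ≠ C}, f ↑t' * G' ⟨B, hBC⟩ t' = 0 :=
        Finset.sum_eq_zero fun t _ => by rw [congrFun hf'0 t, Pi.zero_apply, zero_mul]
      rw [hz, add_zero] at h0
      rcases mul_eq_zero.mp h0.symm with h | h
      · exact h
      · exact absurd h (pow_ne_zero γ Polynomial.X_ne_zero)
    funext t
    by_cases ht : t = C
    · rw [ht, hfC0]; rfl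
    · exact congrFun hf'0 ⟨t, ht⟩
  exact ⟨G, hdet, hGdegBound, hind⟩

end S2Aux



namespace S2Aux

variable {F : Type*} [Field F]

lemma fd_degreeLT (k : ℕ) : FiniteDimensional F ↥(Polynomial.degreeLT F k) :=
  (Polynomial.degreeLTEquiv F k).symm.finiteDimensional

lemma finrank_degreeLT (k : ℕ) :
    Module.finrank F ↥(Polynomial.degreeLT F k) = k := by
  rw [(Polynomial.degreeLTEquiv F k).finrank_eq, Module.finrank_fintype_fun_eq_card,
    Fintype.card_fin]

end S2Aux

namespace S2Aux

universe u
variable {F : Type*} [Field F]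

lemma backward_aux {n d : ℕ} (hn : 0 < n) (hd : 0 < d) (p : Fin n → F[X])
    (hmonic : ∀ j, (p j).Monic) (hsum : ∑ j, (p j).natDegree = d * n) :
    ∃ P : Matrix (Fin n) (Fin n) F[X],
      (∀ i j, (P i j).degree ≤ (d : WithBot ℕ)) ∧
      (∃ i j, (P i j).degree = (d : WithBot ℕ)) ∧
      (Matrix.of fun i j => (P i j).coeff d : Matrix (Fin n) (Fin n) F) = 1 ∧
      ∃ U V : Matrix (Fin n) (Fin n) F[X], IsUnit U.det ∧ IsUnit V.det ∧
        Matrix.diagonal p = U * P * V := by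
  obtain ⟨G, hGdet, hGdeg, hGind⟩ :=
    cascade (F := F) d hd n (Fin n) p (Fintype.card_fin n) hmonic hsum
  haveI : ∀ k : ℕ, FiniteDimensional F ↥(Polynomial.degreeLT F k) := fd_degreeLT
  -- the linear map
  set Φ : (Fin n → ↥(Polynomial.degreeLT F d)) →ₗ[F]
      (∀ m : Fin n, ↥(Polynomial.degreeLT F ((p m).natDegree))) :=
    { toFun := fun f => fun m =>
        ⟨(∑ t, ((f t : F[X]) * G m t)) %ₘ p m, by
          rw [Polynomial.mem_degreeLT, ← Polynomial.degree_eq_natDegree (hmonic m).ne_zero]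
          exact Polynomial.degree_modByMonic_lt _ (hmonic m)⟩,
      map_add' := by
        intro f g
        funext m
        apply Subtype.ext
        simp only [Pi.add_apply, Submodule.coe_add]
        rw [← Polynomial.add_modByMonic]
        congr 1
        rw [← Finset.sum_add_distrib]
        exact Finset.sum_congr rfl fun t _ => by rw [add_mul]
      map_smul' := by
        intro c f
        funext m
        apply Subtype.ext
        simp only [Pi.smul_apply, RingHom.id_apply, SetLike.val_smul]
        rw [← Polynomial.smul_modByMonic]
        congr 1
        rw [Finset.smul_sum]
        exact Finset.sum_congr rfl fun t _ => smul_mul_assoc c _ _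
      } with hΦdef
  have hinj : Function.Injective Φ := by
    rw [injective_iff_map_eq_zero]
    intro f hf
    have h0 : (fun t => (f t : F[X])) = 0 := by
      apply hGind
      · intro t
        exact Polynomial.mem_degreeLT.mp (f t).2
      · intro m
        have := congrFun hf m
        rw [← Polynomial.modByMonic_eq_zero_iff_dvd (hmonic m)]
        exact Subtype.ext_iff.mp this
    funext t
    exact Subtype.ext (congrFun h0 t)
  have hrank : Module.finrank F (Fin n → ↥(Polynomial.degreeLT F d))
      = Module.finrank F (∀ m : Fin n, ↥(Polynomial.degreeLT F ((p m).natDegree))) := by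
    rw [Module.finrank_pi_fintype, Module.finrank_pi_fintype]
    simp only [finrank_degreeLT]
    rw [Finset.sum_const, Finset.card_univ, Fintype.card_fin, smul_eq_mul, hsum, Nat.mul_comm]
  have hsurj : Function.Surjective Φ :=
    (LinearMap.injective_iff_surjective_of_finrank_eq_finrank hrank).mp hinj
  -- choose preimages of X^d * G · j
  have htgt : ∀ j : Fin n, ∃ a : Fin n → ↥(Polynomial.degreeLT F d),
      ∀ m, (∑ t, ((a t : F[X]) * G m t)) %ₘ p m = ((X : F[X]) ^ d * G m j) %ₘ p m := by
    intro j
    obtain ⟨a, ha⟩ := hsurj (fun m =>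
      ⟨((X : F[X]) ^ d * G m j) %ₘ p m, by
        rw [Polynomial.mem_degreeLT, ← Polynomial.degree_eq_natDegree (hmonic m).ne_zero]
        exact Polynomial.degree_modByMonic_lt _ (hmonic m)⟩)
    exact ⟨a, fun m => Subtype.ext_iff.mp (congrFun ha m)⟩
  choose a ha using htgt
  -- the matrix P
  set P : Matrix (Fin n) (Fin n) F[X] :=
    fun t j => (if t = j then (X : F[X]) ^ d else 0) - (a j t : F[X]) with hPdef
  have hAdeg : ∀ j t, ((a j t : F[X])).degree < (d : WithBot ℕ) :=
    fun j t => Polynomial.mem_degreeLT.mp (a j t).2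
  have hPdeg : ∀ i j, (P i j).degree ≤ (d : WithBot ℕ) := by
    intro i j
    by_cases h : i = j
    · rw [hPdef]
      simp only [if_pos h]
      refine le_trans (Polynomial.degree_sub_le _ _) ?_
      rw [Polynomial.degree_X_pow]
      exact max_le le_rfl (le_of_lt (hAdeg j i))
    · rw [hPdef]
      simp only [if_neg h, zero_sub, Polynomial.degree_neg]
      exact le_of_lt (hAdeg j i)
  have hPdiag : ∀ i, (P i i).degree = (d : WithBot ℕ) := by
    intro i
    have hPii : P i i = (X : F[X]) ^ d - (a i i : F[X]) := by rw [hPdef]; simp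
    rw [hPii, Polynomial.degree_sub_eq_left_of_degree_lt, Polynomial.degree_X_pow]
    rw [Polynomial.degree_X_pow]
    exact hAdeg i i
  have hlead : (Matrix.of fun i j => (P i j).coeff d : Matrix (Fin n) (Fin n) F) = 1 := by
    refine Matrix.ext fun i j => ?_
    rw [Matrix.of_apply, hPdef]
    by_cases h : i = j
    · simp only [if_pos h]
      rw [Polynomial.coeff_sub, Polynomial.coeff_X_pow, if_pos rfl,
        Polynomial.coeff_eq_zero_of_degree_lt (hAdeg j i), sub_zero, h, Matrix.one_apply_eq]
    · simp only [if_neg h, zero_sub, Polynomial.coeff_neg,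
        Polynomial.coeff_eq_zero_of_degree_lt (hAdeg j i), neg_zero]
      rw [Matrix.one_apply_ne h]
  -- divisibility
  have hsplit : ∀ m j, ∑ t, G m t * P t j
      = (X : F[X]) ^ d * G m j - ∑ t, (a j t : F[X]) * G m t := by
    intro m j
    rw [hPdef]
    simp only [mul_sub]
    rw [Finset.sum_sub_distrib]
    congr 1
    · rw [Finset.sum_eq_single j]
      · rw [if_pos rfl, mul_comm]
      · intro b _ hb; rw [if_neg hb, mul_zero]
      · intro h; exact absurd (Finset.mem_univ j) h
    · exact Finset.sum_congr rfl fun t _ => mul_comm _ _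
  have hdvd : ∀ m j, p m ∣ ∑ t, G m t * P t j := by
    intro m j
    rw [hsplit]
    have h1 := Polynomial.modByMonic_add_div ((X : F[X]) ^ d * G m j) (p m)
    have h2 := Polynomial.modByMonic_add_div (∑ t, (a j t : F[X]) * G m t) (p m)
    refine ⟨((X : F[X]) ^ d * G m j) /ₘ p m - (∑ t, (a j t : F[X]) * G m t) /ₘ p m, ?_⟩
    have hmod := ha j m
    calc (X : F[X]) ^ d * G m j - ∑ t, (a j t : F[X]) * G m t
        = (((X : F[X]) ^ d * G m j) %ₘ p m + p m * (((X : F[X]) ^ d * G m j) /ₘ p m))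
          - ((∑ t, (a j t : F[X]) * G m t) %ₘ p m
            + p m * ((∑ t, (a j t : F[X]) * G m t) /ₘ p m)) := by rw [h1, h2]
      _ = p m * (((X : F[X]) ^ d * G m j) /ₘ p m - (∑ t, (a j t : F[X]) * G m t) /ₘ p m) := by
          rw [hmod]; ring
  -- W
  set W : Matrix (Fin n) (Fin n) F[X] :=
    Matrix.of (fun m j => (∑ t, G m t * P t j) /ₘ p m) with hWdef
  have hDW : Matrix.diagonal p * W = G * P := by
    refine Matrix.ext fun m j => ?_
    have hWmj : W m j = (∑ t, G m t * P t j) /ₘ p m := rfl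
    rw [Matrix.diagonal_mul, hWmj, Matrix.mul_apply]
    have hdv := hdvd m j
    have h1 := Polynomial.modByMonic_add_div (∑ t, G m t * P t j) (p m)
    rw [(Polynomial.modByMonic_eq_zero_iff_dvd (hmonic m)).mpr hdv, zero_add] at h1
    exact h1
  -- determinant chase
  have hPcoeff : (P.det).coeff (d * n) = 1 := by
    rw [det_coeff_eq P hPdeg, hlead, Matrix.det_one]
  have hPdet_ne : P.det ≠ 0 := fun h0 => by
    rw [h0, Polynomial.coeff_zero] at hPcoeff
    exact (one_ne_zero : (1 : F) ≠ 0) hPcoeff.symm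
  have hdetDW : (Matrix.diagonal p).det * W.det = G.det * P.det := by
    rw [← Matrix.det_mul, ← Matrix.det_mul, hDW]
  have hdetD : (Matrix.diagonal p).det = ∏ j, p j := Matrix.det_diagonal
  have hdetDnd : ((Matrix.diagonal p).det).natDegree = d * n := by
    rw [hdetD, Polynomial.natDegree_prod _ _ fun j _ => (hmonic j).ne_zero, hsum]
  have hdetDne : (Matrix.diagonal p).det ≠ 0 := by
    rw [hdetD]
    exact Finset.prod_ne_zero_iff.mpr fun j _ => (hmonic j).ne_zero
  have hGdet_ne : G.det ≠ 0 := hGdet.ne_zero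
  have hWdet_ne : W.det ≠ 0 := by
    intro h0
    rw [h0, mul_zero] at hdetDW
    exact mul_ne_zero hGdet_ne hPdet_ne hdetDW.symm
  have hWnd : (W.det).natDegree = 0 := by
    have h1 : ((Matrix.diagonal p).det * W.det).natDegree
        = (G.det * P.det).natDegree := by rw [hdetDW]
    rw [Polynomial.natDegree_mul hdetDne hWdet_ne,
      Polynomial.natDegree_mul hGdet_ne hPdet_ne, hdetDnd,
      Polynomial.natDegree_eq_zero_of_isUnit hGdet] at h1
    have h2 : (P.det).natDegree ≤ d * n :=
      Polynomial.natDegree_le_iff_degree_le.mpr (det_degree_le P hPdeg)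
    omega
  have hWunit : IsUnit W.det := by
    obtain ⟨c, hc⟩ := Polynomial.natDegree_eq_zero.mp hWnd
    have hcne : c ≠ 0 := by
      intro h0
      rw [h0, map_zero] at hc
      exact hWdet_ne hc.symm
    rw [← hc]
    exact Polynomial.isUnit_C.mpr (isUnit_iff_ne_zero.mpr hcne)
  have hWinv : IsUnit (W⁻¹).det := Matrix.isUnit_nonsing_inv_det W hWunit
  have hfinal : Matrix.diagonal p = G * P * W⁻¹ := by
    calc Matrix.diagonal p = Matrix.diagonal p * (W * W⁻¹) := by
          rw [Matrix.mul_nonsing_inv W hWunit, Matrix.mul_one]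
      _ = (Matrix.diagonal p * W) * W⁻¹ := by rw [Matrix.mul_assoc]
      _ = (G * P) * W⁻¹ := by rw [hDW]
  refine ⟨P, hPdeg, ⟨⟨0, hn⟩, ⟨0, hn⟩, hPdiag _⟩, hlead, G, W⁻¹, hGdet, hWinv, hfinal⟩

end S2Aux

end Auxiliary

theorem statement_2 {F : Type*} [Field F] (n d : ℕ) (hn : 0 < n) (hd : 0 < d)
    (p : Fin n → F[X]) (hmonic : ∀ j, (p j).Monic)
    (hchain : ∀ (j : Fin n) (h : (j : ℕ) + 1 < n), p j ∣ p ⟨(j : ℕ) + 1, h⟩) :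
    (∃ P : Matrix (Fin n) (Fin n) F[X],
        MatDegEq P d ∧ IsUnit (leadMat P d).det ∧ UnimodEquiv P (Matrix.diagonal p)) ↔
      ∑ j, (p j).natDegree = d * n := by
  constructor
  · rintro ⟨P, ⟨hdeg, -⟩, hlead, U, V, hU, hV, hEq⟩
    exact S2Aux.forward_aux p hmonic P U V hdeg hlead hU hV hEq
  · intro hsum
    obtain ⟨P, hPdeg, hPex, hlead, U, V, hU, hV, hEq⟩ :=
      S2Aux.backward_aux hn hd p hmonic hsum
    refine ⟨P, ⟨hPdeg, hPex⟩, ?_, U, V, hU, hV, hEq⟩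
    have h1 : leadMat P d = 1 := hlead
    rw [h1]
    simp
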